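/- arXiv:1509.02404 — 2 statements merged into one kernel-verified Lean document; each statement's English description precedes it below -/
import Mathlib

section
/- Let R be a Noetherian ring, I ⊆ R an ideal, and M a finite R-module such that no associated prime of M contains I. Then colim_n Hom_R(I^n, M) is a finite R-module if and only if, for every associated prime q of M, the module colim_n Hom_R(I^n, R/q) is a finite R-module. -/
universe u

/-- The local hull `colim_n Hom_R(Iⁿ, M)`, the colimit taken along the maps induced by the
inclusions `Iⁿ⁺¹ ⊆ Iⁿ` (realized as a direct limit over `ℕ`). -/
noncomputable abbrev localHull (R : Type u) [CommRing R] (I : Ideal R)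
    (M : Type u) [AddCommGroup M] [Module R M] : Type u :=
  Module.DirectLimit (ι := ℕ) (fun n => (I ^ n : Ideal R) →ₗ[R] M)
    (fun _ _ h => LinearMap.lcomp R M (Submodule.inclusion (Ideal.pow_le_pow_right h)))

namespace LocalHullProof

variable {R : Type u} [CommRing R] (I : Ideal R)
variable {M N P : Type u} [AddCommGroup M] [Module R M] [AddCommGroup N] [Module R N]
  [AddCommGroup P] [Module R P]

instance ds : DirectedSystem (fun n => (I ^ n : Ideal R) →ₗ[R] M)
    (fun m n h => LinearMap.lcomp R M (Submodule.inclusion (Ideal.pow_le_pow_right h))) := by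
  constructor
  · intro i x; ext y; rfl
  · intro i j k hij hjk x; ext y; rfl

/-- canonical map from level n -/
noncomputable def Lof (n : ℕ) : ((I ^ n : Ideal R) →ₗ[R] M) →ₗ[R] localHull R I M :=
  Module.DirectLimit.of R ℕ (fun n => (I ^ n : Ideal R) →ₗ[R] M)
    (fun _ _ h => LinearMap.lcomp R M (Submodule.inclusion (Ideal.pow_le_pow_right h))) n

lemma Lof_restrict {m n : ℕ} (h : m ≤ n) (φ : (I ^ m : Ideal R) →ₗ[R] M) :
    Lof I n (φ ∘ₗ Submodule.inclusion (Ideal.pow_le_pow_right h)) = Lof I m φ :=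
  Module.DirectLimit.of_f (hij := h)

lemma Lof_surjective (z : localHull R I M) : ∃ n φ, Lof I n φ = z :=
  Module.DirectLimit.exists_of z

lemma Lof_zero {n : ℕ} (φ : (I ^ n : Ideal R) →ₗ[R] M) (h : Lof I n φ = 0) :
    ∃ m, ∃ hh : n ≤ m, φ ∘ₗ Submodule.inclusion (Ideal.pow_le_pow_right hh) = 0 :=
  Module.DirectLimit.of.zero_exact h

/-- functoriality -/
noncomputable def Lmap (f : M →ₗ[R] N) : localHull R I M →ₗ[R] localHull R I N :=
  Module.DirectLimit.map (fun n => LinearMap.llcomp R (I ^ n : Ideal R) M N f)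
    (fun _ _ _ => rfl)

lemma Lmap_of (f : M →ₗ[R] N) {n : ℕ} (φ : (I ^ n : Ideal R) →ₗ[R] M) :
    Lmap I f (Lof I n φ) = Lof I n (f ∘ₗ φ) :=
  Module.DirectLimit.map_apply_of _ _ _

lemma Lmap_injective (f : M →ₗ[R] N) (hf : Function.Injective f) :
    Function.Injective (Lmap I f) := by
  rw [injective_iff_map_eq_zero]
  intro z hz
  obtain ⟨n, φ, rfl⟩ := Lof_surjective I z
  rw [Lmap_of] at hz
  obtain ⟨m, hm, h0⟩ := Lof_zero I _ hz
  rw [← Lof_restrict I hm φ]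
  have hres : φ ∘ₗ Submodule.inclusion (Ideal.pow_le_pow_right hm) = 0 := by
    ext x
    apply hf
    have := LinearMap.congr_fun h0 x
    simpa using this
  rw [hres, map_zero]

lemma Lmap_exact (f : M →ₗ[R] N) (g : N →ₗ[R] P) (hf : Function.Injective f)
    (h : LinearMap.range f = LinearMap.ker g) :
    LinearMap.range (Lmap I f) = LinearMap.ker (Lmap I g) := by
  apply le_antisymm
  · rintro _ ⟨z, rfl⟩
    obtain ⟨n, φ, rfl⟩ := Lof_surjective I z
    rw [LinearMap.mem_ker, Lmap_of, Lmap_of]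
    have : g ∘ₗ (f ∘ₗ φ) = 0 := by
      ext x
      have : f (φ x) ∈ LinearMap.ker g := h ▸ LinearMap.mem_range_self f (φ x)
      simpa using this
    rw [this, map_zero]
  · intro z hz
    obtain ⟨n, φ, rfl⟩ := Lof_surjective I z
    rw [LinearMap.mem_ker, Lmap_of] at hz
    obtain ⟨m, hm, h0⟩ := Lof_zero I _ hz
    -- φ restricted to I^m lands in range f = ker g
    set φ' := φ ∘ₗ Submodule.inclusion (Ideal.pow_le_pow_right hm) with hφ'
    have hland : ∀ x, φ' x ∈ LinearMap.range f := by
      intro x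
      rw [h, LinearMap.mem_ker]
      exact LinearMap.congr_fun h0 x
    set e := LinearEquiv.ofInjective f hf
    set ψ : (I ^ m : Ideal R) →ₗ[R] M :=
      e.symm.toLinearMap ∘ₗ (φ'.codRestrict (LinearMap.range f) hland) with hψ
    refine ⟨Lof I m ψ, ?_⟩
    rw [Lmap_of, ← Lof_restrict I hm φ]
    congr 1
    ext x
    have key : f (ψ x) = φ' x := by
      simp only [hψ, LinearMap.comp_apply, LinearEquiv.coe_coe]
      have h2 : ∀ z : M, (e z : N) = f z := fun z => rfl
      rw [← h2, e.apply_symm_apply]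
      rfl
    simpa [hφ'] using key

/-- key finiteness transfer: injectivity -/
lemma finite_of_injective [IsNoetherianRing R] (f : M →ₗ[R] N) (hf : Function.Injective f)
    [Module.Finite R (localHull R I N)] : Module.Finite R (localHull R I M) := by
  have h1 : IsNoetherian R (localHull R I N) :=
    isNoetherian_of_isNoetherianRing_of_finite R _
  have h2 : IsNoetherian R (localHull R I M) :=
    isNoetherian_of_injective (Lmap I f) (Lmap_injective I f hf)
  exact (by haveI := h2; infer_instance : Module.Finite R (localHull R I M))

/-- key finiteness transfer: extensions -/
lemma finite_of_exact [IsNoetherianRing R] (f : M →ₗ[R] N) (g : N →ₗ[R] P)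
    (hf : Function.Injective f) (h : LinearMap.range f = LinearMap.ker g)
    [Module.Finite R (localHull R I M)] [Module.Finite R (localHull R I P)] :
    Module.Finite R (localHull R I N) := by
  have h1 : IsNoetherian R (localHull R I M) :=
    isNoetherian_of_isNoetherianRing_of_finite R _
  have h2 : IsNoetherian R (localHull R I P) :=
    isNoetherian_of_isNoetherianRing_of_finite R _
  have h3 : IsNoetherian R (localHull R I N) :=
    isNoetherian_of_range_eq_ker (Lmap I f) (Lmap I g) (Lmap_exact I f g hf h)
  exact (by haveI := h3; infer_instance : Module.Finite R (localHull R I N))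

/-- subsingleton modules have subsingleton hulls -/
lemma subsingleton_hull [Subsingleton M] : Subsingleton (localHull R I M) := by
  refine subsingleton_iff_forall_eq 0 |>.mpr fun z => ?_
  obtain ⟨n, φ, rfl⟩ := Lof_surjective I z
  have : φ = 0 := Subsingleton.elim _ _
  rw [this, map_zero]

lemma finite_of_subsingleton [Subsingleton M] : Module.Finite R (localHull R I M) := by
  have := subsingleton_hull I (M := M)
  exact Module.Finite.of_surjective (0 : R →ₗ[R] localHull R I M)
    (fun x => ⟨0, Subsingleton.elim _ _⟩)

lemma finite_of_equiv [IsNoetherianRing R] (e : M ≃ₗ[R] N)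
    [Module.Finite R (localHull R I N)] : Module.Finite R (localHull R I M) :=
  finite_of_injective I e.toLinearMap e.injective

lemma finite_of_subsingleton_hull (h : Subsingleton (localHull R I M)) :
    Module.Finite R (localHull R I M) :=
  haveI := h
  Module.Finite.of_surjective (0 : R →ₗ[R] localHull R I M)
    (fun x => ⟨0, Subsingleton.elim _ _⟩)

/-- If `I ≤ q` and `q ^ k` kills `M`, the local hull vanishes. -/
lemma subsingleton_hull_of_nilpotent {q : Ideal R} (hIq : I ≤ q) {k : ℕ}
    (hk : ∀ a ∈ q ^ k, ∀ x : M, a • x = 0) : Subsingleton (localHull R I M) := by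
  refine subsingleton_iff_forall_eq 0 |>.mpr fun z => ?_
  obtain ⟨n, φ, rfl⟩ := Lof_surjective I z
  rw [← Lof_restrict I (Nat.le_add_right n k) φ]
  have aux : ∀ y ∈ I ^ k * I ^ n, ∃ hyn : y ∈ (I ^ n : Ideal R), φ ⟨y, hyn⟩ = 0 := by
    intro y hy
    refine Submodule.mul_induction_on hy ?_ ?_
    · intro a ha z hz
      refine ⟨Submodule.smul_mem _ a hz, ?_⟩
      have : (⟨a * z, Submodule.smul_mem _ a hz⟩ : (I ^ n : Ideal R)) = a • ⟨z, hz⟩ := rfl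
      rw [this, map_smul]
      exact hk a (Ideal.pow_right_mono hIq k ha) _
    · rintro y1 y2 ⟨hm1, e1⟩ ⟨hm2, e2⟩
      refine ⟨Submodule.add_mem _ hm1 hm2, ?_⟩
      have : (⟨y1 + y2, Submodule.add_mem _ hm1 hm2⟩ : (I ^ n : Ideal R))
          = ⟨y1, hm1⟩ + ⟨y2, hm2⟩ := rfl
      rw [this, map_add, e1, e2, add_zero]
  have hres : φ ∘ₗ Submodule.inclusion (Ideal.pow_le_pow_right (Nat.le_add_right n k)) = 0 := by
    ext ⟨x, hx⟩
    have hx' : x ∈ I ^ k * I ^ n := by rw [← pow_add, add_comm]; exact hx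
    obtain ⟨hyn, hval⟩ := aux x hx'
    exact hval
  rw [hres, map_zero]

section Pieces
variable [IsNoetherianRing R]

lemma finite_prod [Module.Finite R (localHull R I M)] [Module.Finite R (localHull R I N)] :
    Module.Finite R (localHull R I (M × N)) :=
  finite_of_exact I (LinearMap.inl R M N) (LinearMap.snd R M N) LinearMap.inl_injective
    (LinearMap.range_inl R M N)

lemma finite_pi (D : Type u) [AddCommGroup D] [Module R D]
    [Module.Finite R (localHull R I D)] (d : ℕ) :
    Module.Finite R (localHull R I (Fin d → D)) := by
  induction d with
  | zero => exact finite_of_subsingleton I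
  | succ d ih =>
    haveI := ih
    haveI : Module.Finite R (localHull R I (D × (Fin d → D))) := finite_prod I
    have e : (Fin (d + 1) → D) ≃ₗ[R] D × (Fin d → D) :=
      { (Fin.consEquiv fun _ : Fin (d + 1) => D).symm with
        map_add' := fun _ _ => rfl
        map_smul' := fun _ _ => rfl }
    exact finite_of_equiv I e

end Pieces

section RankOne

variable {q : Ideal R}

lemma smul_mk_eq (r : R) (d : R ⧸ q) : r • d = Ideal.Quotient.mk q r * d := by
  obtain ⟨e, rfl⟩ := Ideal.Quotient.mk_surjective d
  rw [← map_mul, ← smul_eq_mul]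
  exact (Submodule.Quotient.mk_smul q r e).symm

/-- A finite module which is torsion-free over `R/q` and has "rank one" w.r.t. `x₀`
embeds into `R ⧸ q`. -/
lemma exists_injective_of_rank_one (hq : q.IsPrime) (Q : Type u) [AddCommGroup Q] [Module R Q]
    [Module.Finite R Q]
    (hann : ∀ a ∈ q, ∀ x : Q, a • x = 0)
    (htf : ∀ s ∉ q, ∀ x : Q, s • x = 0 → x = 0)
    (x₀ : Q) (hgen : ∀ y : Q, ∃ s ∉ q, ∃ c : R, s • y = c • x₀) :
    ∃ f : Q →ₗ[R] R ⧸ q, Function.Injective f := by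
  classical
  by_cases hx0 : x₀ = 0
  · -- then Q is trivial
    have : ∀ y : Q, y = 0 := by
      intro y
      obtain ⟨s, hs, c, hc⟩ := hgen y
      exact htf s hs y (by rw [hc, hx0, smul_zero])
    exact ⟨0, fun a b _ => by rw [this a, this b]⟩
  haveI := hq
  haveI : IsDomain (R ⧸ q) := Ideal.Quotient.isDomain q
  set D := R ⧸ q
  set K := FractionRing D
  set θ : R →+* K := (algebraMap D K).comp (Ideal.Quotient.mk q) with hθ
  have hAinj : Function.Injective (algebraMap D K) := IsFractionRing.injective D K
  have hθ0 : ∀ a : R, θ a = 0 ↔ a ∈ q := by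
    intro a
    rw [hθ, RingHom.comp_apply, ← (algebraMap D K).map_zero]
    rw [hAinj.eq_iff, Ideal.Quotient.eq_zero_iff_mem]
  -- the function into K
  set ψ : Q → K := fun y => θ (hgen y).choose_spec.2.choose / θ (hgen y).choose with hψ
  have spec : ∀ y : Q, (hgen y).choose ∉ q ∧
      (hgen y).choose • y = (hgen y).choose_spec.2.choose • x₀ :=
    fun y => ⟨(hgen y).choose_spec.1, (hgen y).choose_spec.2.choose_spec⟩
  have key : ∀ (y : Q) (s c : R), s ∉ q → s • y = c • x₀ → ψ y = θ c / θ s := by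
    intro y s c hs hc
    obtain ⟨hs', hc'⟩ := spec y
    set s' := (hgen y).choose
    set c' := (hgen y).choose_spec.2.choose
    have h0 : (s * c' - s' * c) • x₀ = 0 := by
      rw [sub_smul, sub_eq_zero, mul_smul, mul_smul, ← hc', ← hc, smul_comm]
    have hmem : s * c' - s' * c ∈ q := by
      by_contra hmem
      exact hx0 (htf _ hmem x₀ h0)
    have : θ (s * c') = θ (s' * c) := by
      rw [← sub_eq_zero, ← map_sub, hθ0]
      exact hmem
    rw [map_mul, map_mul] at this
    have hsne : θ s ≠ 0 := fun h => hs ((hθ0 s).mp h)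
    have hs'ne : θ s' ≠ 0 := fun h => hs' ((hθ0 s').mp h)
    rw [hψ]
    show θ c' / θ s' = θ c / θ s
    rw [div_eq_div_iff hs'ne hsne]
    linear_combination this
  have ψ0 : ψ 0 = 0 := by
    rw [key 0 1 0 (fun h => hq.ne_top (Ideal.eq_top_of_isUnit_mem q h isUnit_one)) (by simp),
      map_zero, zero_div]
  have ψadd : ∀ y z : Q, ψ (y + z) = ψ y + ψ z := by
    intro y z
    obtain ⟨hs, hc⟩ := spec y
    obtain ⟨ht, hd⟩ := spec z
    set s := (hgen y).choose; set c := (hgen y).choose_spec.2.choose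
    set t := (hgen z).choose; set d := (hgen z).choose_spec.2.choose
    have hst : s * t ∉ q := fun h => (hq.mem_or_mem h).elim hs ht
    have hcomb : (s * t) • (y + z) = (t * c + s * d) • x₀ := by
      calc (s * t) • (y + z) = (s * t) • y + (s * t) • z := smul_add _ _ _
        _ = t • (s • y) + s • (t • z) := by
            congr 1
            · rw [mul_comm, mul_smul]
            · rw [mul_smul]
        _ = t • (c • x₀) + s • (d • x₀) := by rw [hc, hd]
        _ = (t * c + s * d) • x₀ := by rw [add_smul, mul_smul, mul_smul]
    rw [key _ _ _ hst hcomb, key y s c hs hc, key z t d ht hd]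
    have hsne : θ s ≠ 0 := fun h => hs ((hθ0 s).mp h)
    have htne : θ t ≠ 0 := fun h => ht ((hθ0 t).mp h)
    rw [map_add, map_mul, map_mul, map_mul]
    rw [div_add_div _ _ hsne htne, div_eq_div_iff (mul_ne_zero hsne htne) (mul_ne_zero hsne htne)]
    ring
  have ψsmul : ∀ (r : R) (y : Q), ψ (r • y) = θ r * ψ y := by
    intro r y
    obtain ⟨hs, hc⟩ := spec y
    set s := (hgen y).choose; set c := (hgen y).choose_spec.2.choose
    have : s • (r • y) = (r * c) • x₀ := by rw [smul_comm, hc, mul_smul]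
    rw [key _ _ _ hs this, key y s c hs hc, map_mul, mul_div_assoc]
  have ψinj0 : ∀ y : Q, ψ y = 0 → y = 0 := by
    intro y h
    obtain ⟨hs, hc⟩ := spec y
    set s := (hgen y).choose; set c := (hgen y).choose_spec.2.choose
    rw [hψ] at h
    have : θ c = 0 := by
      by_contra hne
      have hsne : θ s ≠ 0 := fun h2 => hs ((hθ0 s).mp h2)
      exact hne ((div_eq_zero_iff.mp h).resolve_right hsne)
    have : c ∈ q := (hθ0 c).mp this
    have : c • x₀ = 0 := hann c this x₀
    exact htf s hs y (by rw [hc, this])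
  -- common denominator over generators
  obtain ⟨gs, hgs⟩ := Module.Finite.fg_top (R := R) (M := Q)
  set σ : R := ∏ g ∈ gs, (hgen g).choose with hσ
  have hσq : σ ∉ q := by
    rw [hσ]
    intro h
    obtain ⟨g, hg, hmem⟩ := Ideal.IsPrime.prod_mem_iff.mp h
    exact (spec g).1 hmem
  have hσne : θ σ ≠ 0 := fun h => hσq ((hθ0 σ).mp h)
  -- the submodule of elements with `θ σ * ψ y` integral
  set S : Submodule R Q :=
    { carrier := {y | ∃ d : D, algebraMap D K d = θ σ * ψ y}
      add_mem' := by
        rintro y z ⟨d1, h1⟩ ⟨d2, h2⟩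
        exact ⟨d1 + d2, by rw [map_add, h1, h2, ψadd, mul_add]⟩
      zero_mem' := ⟨0, by rw [map_zero, ψ0, mul_zero]⟩
      smul_mem' := by
        rintro r y ⟨d, hd⟩
        refine ⟨Ideal.Quotient.mk q r * d, ?_⟩
        rw [map_mul, hd, ψsmul]
        show θ r * (θ σ * ψ y) = θ σ * (θ r * ψ y)
        ring } with hS
  have hStop : S = ⊤ := by
    rw [eq_top_iff, ← hgs, Submodule.span_le]
    intro g hg
    obtain ⟨hs, hc⟩ := spec g
    refine ⟨Ideal.Quotient.mk q ((∏ h ∈ gs.erase g, (hgen h).choose) *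
      (hgen g).choose_spec.2.choose), ?_⟩
    have : σ = (hgen g).choose * ∏ h ∈ gs.erase g, (hgen h).choose :=
      (Finset.mul_prod_erase gs _ hg).symm
    rw [key g _ _ hs hc, this]
    have hsne : θ ((hgen g).choose) ≠ 0 := fun h => hs ((hθ0 _).mp h)
    show θ ((∏ h ∈ gs.erase g, (hgen h).choose) * (hgen g).choose_spec.2.choose) = _
    rw [map_mul, map_mul]
    rw [mul_div_assoc', eq_div_iff hsne]
    ring
  have hmem : ∀ y : Q, ∃ d : D, algebraMap D K d = θ σ * ψ y := by
    intro y
    have : y ∈ S := hStop ▸ Submodule.mem_top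
    exact this
  set f : Q → D := fun y => (hmem y).choose with hf
  have fspec : ∀ y, algebraMap D K (f y) = θ σ * ψ y := fun y => (hmem y).choose_spec
  refine ⟨{ toFun := f
            map_add' := by
              intro y z
              apply hAinj
              rw [map_add, fspec, fspec, fspec, ψadd, mul_add]
            map_smul' := by
              intro r y
              apply hAinj
              rw [RingHom.id_apply, smul_mk_eq, map_mul, fspec, fspec, ψsmul]
              show θ σ * (θ r * ψ y) = θ r * (θ σ * ψ y)
              ring }, ?_⟩
  intro y z h
  simp only [LinearMap.coe_mk, AddHom.coe_mk] at h
  have : θ σ * ψ y = θ σ * ψ z := by rw [← fspec, ← fspec, h]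
  have hyz : ψ y = ψ z := mul_left_cancel₀ hσne this
  have hsub : ψ (y - z) = 0 := by
    have h2 := ψadd (y - z) z
    rw [sub_add_cancel] at h2
    rw [← hyz] at h2
    -- h2 : ψ y = ψ (y - z) + ψ y
    have := congrArg (fun w => w - ψ y) h2
    simpa using this.symm
  have := ψinj0 _ hsub
  exact sub_eq_zero.mp this

end RankOne

section TorsionFree

variable [IsNoetherianRing R]

/-- induction statement -/
private def TFP (I q : Ideal R) (n : ℕ) : Prop :=
  ∀ (Q : Type u) [AddCommGroup Q] [Module R Q],
    (∃ s : Finset Q, s.card ≤ n ∧ Submodule.span R (s : Set Q) = ⊤) →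
    (∀ a ∈ q, ∀ x : Q, a • x = 0) →
    (∀ s ∉ q, ∀ x : Q, s • x = 0 → x = 0) →
    Module.Finite R (localHull R I Q)

lemma tfp_all {q : Ideal R} (hq : q.IsPrime)
    [Module.Finite R (localHull R I (R ⧸ q))] (n : ℕ) : TFP I q n := by
  induction n with
  | zero =>
    intro Q _ _ hspan hann htf
    obtain ⟨s, hcard, hs⟩ := hspan
    have : s = ∅ := Finset.card_eq_zero.mp (Nat.le_zero.mp hcard)
    rw [this] at hs
    simp only [Finset.coe_empty, Submodule.span_empty] at hs
    haveI : Subsingleton Q := by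
      constructor
      intro a b
      have ha : a ∈ (⊥ : Submodule R Q) := hs ▸ Submodule.mem_top
      have hb : b ∈ (⊥ : Submodule R Q) := hs ▸ Submodule.mem_top
      rw [Submodule.mem_bot] at ha hb
      rw [ha, hb]
    exact finite_of_subsingleton I
  | succ n ih =>
    intro Q _ _ hspan hann htf
    classical
    obtain ⟨s, hcard, hs⟩ := hspan
    rcases s.eq_empty_or_nonempty with rfl | ⟨x₀, hx₀⟩
    · simp only [Finset.coe_empty, Submodule.span_empty] at hs
      haveI : Subsingleton Q := by
        constructor
        intro a b
        have ha : a ∈ (⊥ : Submodule R Q) := hs ▸ Submodule.mem_top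
        have hb : b ∈ (⊥ : Submodule R Q) := hs ▸ Submodule.mem_top
        rw [Submodule.mem_bot] at ha hb
        rw [ha, hb]
      exact finite_of_subsingleton I
    · haveI : Module.Finite R Q := ⟨⟨s, hs⟩⟩
      haveI : IsNoetherian R Q := isNoetherian_of_isNoetherianRing_of_finite R Q
      have h1q : (1 : R) ∉ q := fun h => hq.ne_top (q.eq_top_iff_one.mpr h)
      -- the saturation of the span of x₀
      set C : Submodule R Q :=
        { carrier := {y | ∃ t ∉ q, ∃ c : R, t • y = c • x₀}
          add_mem' := by
            rintro y z ⟨t1, ht1, c1, hc1⟩ ⟨t2, ht2, c2, hc2⟩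
            refine ⟨t1 * t2, fun h => (hq.mem_or_mem h).elim ht1 ht2, t2 * c1 + t1 * c2, ?_⟩
            calc (t1 * t2) • (y + z) = (t1 * t2) • y + (t1 * t2) • z := smul_add _ _ _
              _ = t2 • (t1 • y) + t1 • (t2 • z) := by
                  congr 1
                  · rw [mul_comm, mul_smul]
                  · rw [mul_smul]
              _ = t2 • (c1 • x₀) + t1 • (c2 • x₀) := by rw [hc1, hc2]
              _ = (t2 * c1 + t1 * c2) • x₀ := by rw [add_smul, mul_smul, mul_smul]
          zero_mem' := ⟨1, h1q, 0, by simp⟩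
          smul_mem' := by
            rintro r y ⟨t, ht, c, hc⟩
            exact ⟨t, ht, r * c, by rw [smul_comm, hc, mul_smul]⟩ } with hC
      have hx₀C : x₀ ∈ C := ⟨1, h1q, 1, by simp⟩
      -- the quotient has fewer generators
      haveI hfinQC : Module.Finite R (localHull R I (Q ⧸ C)) := by
        refine ih (Q ⧸ C) ⟨(s.erase x₀).image C.mkQ, ?_, ?_⟩ ?_ ?_
        · exact le_trans (Finset.card_image_le) (by rw [Finset.card_erase_of_mem hx₀]; omega)
        · -- span of images is everything
          have hmk0 : C.mkQ x₀ = 0 := by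
            rw [Submodule.mkQ_apply]
            exact (Submodule.Quotient.mk_eq_zero C).mpr hx₀C
          have hins : (s : Set Q) = insert x₀ ((s : Set Q) \ {x₀}) := by
            rw [Set.insert_diff_singleton]
            exact (Set.insert_eq_of_mem (Finset.mem_coe.mpr hx₀)).symm
          have h1 : Submodule.span R (C.mkQ '' (s : Set Q)) = ⊤ := by
            rw [Submodule.span_image, hs, Submodule.map_top, Submodule.range_mkQ]
          rw [hins, Set.image_insert_eq, hmk0, Submodule.span_insert_zero] at h1
          rw [Finset.coe_image, Finset.coe_erase]
          exact h1
        · intro a ha x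
          obtain ⟨y, rfl⟩ := Submodule.Quotient.mk_surjective C x
          rw [← Submodule.Quotient.mk_smul, hann a ha y, Submodule.Quotient.mk_zero]
        · intro t ht x hx
          obtain ⟨y, rfl⟩ := Submodule.Quotient.mk_surjective C x
          rw [← Submodule.Quotient.mk_smul, Submodule.Quotient.mk_eq_zero] at hx
          rw [Submodule.Quotient.mk_eq_zero]
          obtain ⟨t', ht', c, hc⟩ := hx
          exact ⟨t' * t, fun h => (hq.mem_or_mem h).elim ht' ht, c, by rw [mul_smul]; exact hc⟩
      -- C is rank one, embed into R ⧸ q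
      haveI hfinC : Module.Finite R (localHull R I C) := by
        obtain ⟨f, hf⟩ := exists_injective_of_rank_one hq C
          (fun a ha x => Subtype.ext (hann a ha (x : Q)))
          (fun t ht x hx => Subtype.ext (htf t ht (x : Q) (by
            rw [← Submodule.coe_smul, hx]; rfl)))
          ⟨x₀, hx₀C⟩ (fun y => by
            obtain ⟨t, ht, c, hc⟩ := y.2
            exact ⟨t, ht, c, Subtype.ext (by
              rw [Submodule.coe_smul, Submodule.coe_smul]; exact hc)⟩)
        exact finite_of_injective I f hf
      exact finite_of_exact I C.subtype C.mkQ C.injective_subtype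
        (by rw [Submodule.range_subtype, Submodule.ker_mkQ])

/-- main torsion-free consequence -/
lemma finite_hull_of_torsionfree {q : Ideal R} (hq : q.IsPrime)
    [Module.Finite R (localHull R I (R ⧸ q))]
    (Q : Type u) [AddCommGroup Q] [Module R Q] [Module.Finite R Q]
    (hann : ∀ a ∈ q, ∀ x : Q, a • x = 0)
    (htf : ∀ s ∉ q, ∀ x : Q, s • x = 0 → x = 0) :
    Module.Finite R (localHull R I Q) := by
  obtain ⟨s, hs⟩ := Module.Finite.fg_top (R := R) (M := Q)
  exact tfp_all I hq s.card Q ⟨s, le_refl _, hs⟩ hann htf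

end TorsionFree

section Torsion

variable (q : Ideal R)

/-- the `q`-power-torsion submodule -/
def ptorsion (W : Type u) [AddCommGroup W] [Module R W] : Submodule R W where
  carrier := {x | ∃ k : ℕ, ∀ a ∈ q ^ k, a • x = 0}
  add_mem' := by
    rintro x y ⟨k1, h1⟩ ⟨k2, h2⟩
    refine ⟨max k1 k2, fun a ha => ?_⟩
    rw [smul_add, h1 a (Ideal.pow_le_pow_right (le_max_left k1 k2) ha),
      h2 a (Ideal.pow_le_pow_right (le_max_right k1 k2) ha), add_zero]
  zero_mem' := ⟨0, fun a _ => smul_zero a⟩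
  smul_mem' := by
    rintro r x ⟨k, h⟩
    exact ⟨k, fun a ha => by rw [smul_comm, h a ha, smul_zero]⟩

variable {q}
variable {W : Type u} [AddCommGroup W] [Module R W]

lemma mem_ptorsion {x : W} : x ∈ ptorsion q W ↔ ∃ k : ℕ, ∀ a ∈ q ^ k, a • x = 0 := Iff.rfl

/-- uniform killing exponent -/
lemma ptorsion_uniform [IsNoetherianRing R] [Module.Finite R W] :
    ∃ l : ℕ, ∀ a ∈ q ^ l, ∀ x ∈ ptorsion q W, a • x = 0 := by
  classical
  haveI : IsNoetherian R W := isNoetherian_of_isNoetherianRing_of_finite R W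
  have hfg : (ptorsion q W).FG := IsNoetherian.noetherian _
  obtain ⟨s, hs⟩ := hfg
  have hexp : ∀ g : s, ∃ kg : ℕ, ∀ a ∈ q ^ kg, a • (g : W) = 0 := by
    intro g
    have : (g : W) ∈ ptorsion q W := hs ▸ Submodule.subset_span g.2
    exact this
  choose kg hkg using hexp
  refine ⟨(s.attach).sup (fun g => kg g), fun a ha x hx => ?_⟩
  -- the set of x killed by q^l is a submodule containing the generators
  have hmem : x ∈ Submodule.span R (s : Set W) := by rw [hs]; exact hx
  clear hx
  induction hmem using Submodule.span_induction with
  | mem y hy =>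
    exact hkg ⟨y, hy⟩ a (Ideal.pow_le_pow_right (Finset.le_sup (Finset.mem_attach s ⟨y, hy⟩)) ha)
  | zero => exact smul_zero a
  | add y z _ _ hy hz => rw [smul_add, hy, hz, add_zero]
  | smul r y _ hy => rw [smul_comm, hy, smul_zero]

end Torsion

section AssLemmas

variable {q : Ideal R} {W : Type u} [AddCommGroup W] [Module R W]

lemma ass_ptorsion_le (hq : q.IsPrime) {p : Ideal R}
    (hp : p ∈ associatedPrimes R (↥(ptorsion q W))) :
    p ∈ associatedPrimes R W ∧ q ≤ p := by
  constructor
  · exact associatedPrimes.subset_of_injective (ptorsion q W).injective_subtype hp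
  · obtain ⟨hprime, x, hx⟩ := hp
    obtain ⟨k, hk⟩ := x.2
    intro a ha
    have hak : a ^ k ∈ p := by
      rw [hx]
      apply Ideal.le_radical
      rw [Submodule.mem_colon_singleton, Submodule.mem_bot]
      apply Subtype.ext
      rw [Submodule.coe_smul]
      exact hk (a ^ k) (Ideal.pow_mem_pow ha k)
    exact hprime.mem_of_pow_mem k hak

lemma ptorsion_ne_bot [IsNoetherianRing R] (hq : q ∈ associatedPrimes R W) :
    ptorsion q W ≠ ⊥ := by
  obtain ⟨hprime, x, hx⟩ := isAssociatedPrime_iff.mp (AssociatedPrimes.mem_iff.mp hq)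
  have hxT : x ∈ ptorsion q W := by
    refine ⟨1, fun a ha => ?_⟩
    rw [pow_one] at ha
    rw [hx, Submodule.mem_colon_singleton, Submodule.mem_bot] at ha
    exact ha
  have hx0 : x ≠ 0 := by
    rintro rfl
    apply hprime.ne_top
    rw [hx, Submodule.colon_singleton_zero]
  intro hbot
  rw [hbot, Submodule.mem_bot] at hxT
  exact hx0 hxT

/-- torsion-freeness from associated primes being `⊆ {q}` -/
lemma torsionfree_of_ass_subset [IsNoetherianRing R]
    (hass : associatedPrimes R W ⊆ {q}) :
    ∀ s ∉ q, ∀ x : W, s • x = 0 → x = 0 := by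
  intro s hs x hsx
  by_contra hx0
  obtain ⟨P, hP, hle⟩ := exists_le_isAssociatedPrime_of_isNoetherianRing R x hx0
  have : P = q := hass hP
  apply hs
  rw [← this]
  exact hle (by rw [Submodule.mem_colon_singleton, Submodule.mem_bot]; exact hsx)

/-- associated primes of the quotient by the `q`-power torsion lie in `Ass W` -/
lemma ass_quotient_ptorsion [IsNoetherianRing R] [Module.Finite R W] (hq : q.IsPrime) {p : Ideal R}
    (hp : p ∈ associatedPrimes R (W ⧸ ptorsion q W)) :
    p ∈ associatedPrimes R W := by
  obtain ⟨l, hl⟩ := ptorsion_uniform (q := q) (W := W)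
  obtain ⟨hprime, xb, hx⟩ := isAssociatedPrime_iff.mp (AssociatedPrimes.mem_iff.mp hp)
  obtain ⟨x, rfl⟩ := Submodule.Quotient.mk_surjective _ xb
  -- there is `a ∈ q` with `a ∉ p`
  have hexists : ∃ a ∈ q, a ∉ p := by
    by_contra hno
    push_neg at hno
    -- then q ≤ p, so x ∈ ptorsion, so xb = 0, so p = ⊤
    have hxT : x ∈ ptorsion q W := by
      refine ⟨l + 1, fun b hb => ?_⟩
      rw [pow_succ] at hb
      refine Submodule.mul_induction_on hb ?_ ?_
      · intro c hc a ha
        have hax : a • Submodule.Quotient.mk (p := ptorsion q W) x = 0 := by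
          rw [← Submodule.mem_bot (R := R), ← Submodule.mem_colon_singleton, ← hx]
          exact hno a ha
        rw [← Submodule.Quotient.mk_smul, Submodule.Quotient.mk_eq_zero] at hax
        rw [mul_smul]
        exact hl c hc _ hax
      · intro b1 b2 h1 h2
        rw [add_smul, h1, h2, add_zero]
    have : Submodule.Quotient.mk (p := ptorsion q W) x = 0 :=
      (Submodule.Quotient.mk_eq_zero _).mpr hxT
    apply hprime.ne_top
    rw [hx, this, Submodule.colon_singleton_zero]
  obtain ⟨a, haq, hap⟩ := hexists
  refine AssociatedPrimes.mem_iff.mpr (isAssociatedPrime_iff.mpr ⟨hprime, a ^ l • x, ?_⟩)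
  ext b
  rw [Submodule.mem_colon_singleton, Submodule.mem_bot]
  constructor
  · intro hb
    -- b • xb = 0, so b • x ∈ ptorsion, killed by a^l ∈ q^l
    have : b • Submodule.Quotient.mk (p := ptorsion q W) x = 0 := by
      rw [← Submodule.mem_bot (R := R), ← Submodule.mem_colon_singleton, ← hx]
      exact hb
    rw [← Submodule.Quotient.mk_smul, Submodule.Quotient.mk_eq_zero] at this
    rw [smul_comm]
    exact hl (a ^ l) (Ideal.pow_mem_pow haq l) _ this
  · intro hb
    -- b • a^l • x = 0 ⇒ (b * a^l) • xb = 0 ⇒ b * a^l ∈ p ⇒ b ∈ p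
    have h1 : (b * a ^ l) • Submodule.Quotient.mk (p := ptorsion q W) x = 0 := by
      rw [← Submodule.Quotient.mk_smul, mul_smul, hb, Submodule.Quotient.mk_zero]
    have h2 : b * a ^ l ∈ p := by
      rw [hx, Submodule.mem_colon_singleton, Submodule.mem_bot]
      exact h1
    rcases hprime.mem_or_mem h2 with h | h
    · exact h
    · exact absurd (hprime.mem_of_pow_mem l h) hap

end AssLemmas

section Filtration

variable [IsNoetherianRing R]

/-- A finite module killed by a power of the prime `q` and torsion-free outside `q`
has finite local hull, provided `R⧸q` does. -/
lemma finite_hull_of_primary {q : Ideal R} (hq : q.IsPrime)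
    [Module.Finite R (localHull R I (R ⧸ q))]
    (T : Type u) [AddCommGroup T] [Module R T] [Module.Finite R T]
    (l : ℕ) (hkill : ∀ a ∈ q ^ l, ∀ x : T, a • x = 0)
    (htf : ∀ s ∉ q, ∀ x : T, s • x = 0 → x = 0) :
    Module.Finite R (localHull R I T) := by
  classical
  haveI : IsNoetherian R T := isNoetherian_of_isNoetherianRing_of_finite R T
  have h1q : (1 : R) ∉ q := fun h => hq.ne_top (q.eq_top_iff_one.mpr h)
  -- the saturated filtration
  set F : ℕ → Submodule R T := fun i =>
    { carrier := {x | ∃ t ∉ q, t • x ∈ (q ^ i • ⊤ : Submodule R T)}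
      zero_mem' := ⟨1, h1q, by rw [smul_zero]; exact Submodule.zero_mem _⟩
      add_mem' := by
        rintro x y ⟨t1, ht1, h1⟩ ⟨t2, ht2, h2⟩
        refine ⟨t1 * t2, fun h => (hq.mem_or_mem h).elim ht1 ht2, ?_⟩
        rw [smul_add]
        apply Submodule.add_mem
        · rw [mul_comm, mul_smul]
          exact Submodule.smul_mem _ t2 h1
        · rw [mul_smul]
          exact Submodule.smul_mem _ t1 h2
      smul_mem' := by
        rintro r x ⟨t, ht, hx⟩
        exact ⟨t, ht, by rw [smul_comm]; exact Submodule.smul_mem _ r hx⟩ } with hF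
  have hF0 : F 0 = ⊤ := by
    rw [eq_top_iff]
    intro x _
    refine ⟨1, h1q, ?_⟩
    have : (q ^ 0 • ⊤ : Submodule R T) = ⊤ := by
      rw [pow_zero, Ideal.one_eq_top, Submodule.top_smul]
    rw [this]
    trivial
  have hFl : F l = ⊥ := by
    rw [eq_bot_iff]
    rintro x ⟨t, ht, hx⟩
    have hb : (q ^ l • ⊤ : Submodule R T) ≤ ⊥ :=
      Submodule.smul_le.mpr (fun r hr n _ => by rw [Submodule.mem_bot]; exact hkill r hr n)
    have : t • x = 0 := by rw [← Submodule.mem_bot (R := R)]; exact hb hx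
    rw [Submodule.mem_bot]
    exact htf t ht x this
  have hFmono : ∀ i, F (i + 1) ≤ F i := by
    rintro i x ⟨t, ht, hx⟩
    exact ⟨t, ht, Submodule.smul_mono_left (Ideal.pow_le_pow_right (Nat.le_succ i)) hx⟩
  -- each graded piece has finite hull
  have hstep : ∀ i, Module.Finite R
      (localHull R I (↥(F i) ⧸ Submodule.comap (F i).subtype (F (i + 1)))) := by
    intro i
    set Qi := ↥(F i) ⧸ Submodule.comap (F i).subtype (F (i + 1)) with hQi
    refine finite_hull_of_torsionfree I hq Qi ?_ ?_
    · -- q kills Qi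
      intro a ha z
      obtain ⟨x, rfl⟩ := Submodule.Quotient.mk_surjective _ z
      rw [← Submodule.Quotient.mk_smul, Submodule.Quotient.mk_eq_zero]
      rw [Submodule.mem_comap]
      obtain ⟨t, ht, hx⟩ := x.2
      refine ⟨t, ht, ?_⟩
      have h1 : t • ((a • x : ↥(F i)) : T) = a • (t • (x : T)) := by
        rw [Submodule.coe_smul, smul_comm]
      simp only [Submodule.subtype_apply]
      rw [h1]
      have h2 : a • (t • (x : T)) ∈ (q • (q ^ i • ⊤) : Submodule R T) :=
        Submodule.smul_mem_smul ha hx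
      have h3 : (q • (q ^ i • ⊤) : Submodule R T) = (q ^ (i + 1) • ⊤ : Submodule R T) := by
        rw [← Submodule.smul_assoc, smul_eq_mul, ← pow_succ']
      rwa [h3] at h2
    · -- torsion-free over q
      intro t ht z hz
      obtain ⟨x, rfl⟩ := Submodule.Quotient.mk_surjective _ z
      rw [← Submodule.Quotient.mk_smul, Submodule.Quotient.mk_eq_zero, Submodule.mem_comap] at hz
      rw [Submodule.Quotient.mk_eq_zero, Submodule.mem_comap]
      obtain ⟨t', ht', hx⟩ := hz
      refine ⟨t' * t, fun h => (hq.mem_or_mem h).elim ht' ht, ?_⟩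
      simp only [Submodule.subtype_apply] at hx ⊢
      rw [mul_smul]
      have : t' • (t • (x : T)) = t' • ((t • x : ↥(F i)) : T) := by
        rw [Submodule.coe_smul]
      rw [this]
      exact hx
  -- climb the filtration
  have hclimb : ∀ i, Module.Finite R (localHull R I (T ⧸ F i)) := by
    intro i
    induction i with
    | zero =>
      haveI : Subsingleton (T ⧸ F 0) := by
        constructor
        intro a b
        obtain ⟨x, rfl⟩ := Submodule.Quotient.mk_surjective _ a
        obtain ⟨y, rfl⟩ := Submodule.Quotient.mk_surjective _ b
        rw [Submodule.Quotient.eq]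
        rw [hF0]
        trivial
      exact finite_of_subsingleton I
    | succ i ih =>
      haveI := ih
      haveI := hstep i
      -- the image of F i in T ⧸ F (i+1)
      set ψ : ↥(F i) →ₗ[R] T ⧸ F (i + 1) := (F (i + 1)).mkQ ∘ₗ (F i).subtype with hψ
      have hker : LinearMap.ker ψ = Submodule.comap (F i).subtype (F (i + 1)) := by
        rw [hψ, LinearMap.ker_comp, Submodule.ker_mkQ]
      have hrange : LinearMap.range ψ = (F i).map (F (i + 1)).mkQ := by
        rw [hψ, LinearMap.range_comp, Submodule.range_subtype]
      set G := (F i).map (F (i + 1)).mkQ with hG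
      haveI : Module.Finite R (localHull R I ↥G) := by
        have e : (↥G : Type u) ≃ₗ[R]
            (↥(F i) ⧸ Submodule.comap (F i).subtype (F (i + 1))) :=
          ((LinearEquiv.ofEq _ _ hrange.symm).symm.symm ≪≫ₗ
            ψ.quotKerEquivRange.symm) ≪≫ₗ Submodule.quotEquivOfEq _ _ hker
        exact finite_of_equiv I e
      -- the exact sequence G → T⧸F(i+1) → T⧸F i
      set g : (T ⧸ F (i + 1)) →ₗ[R] T ⧸ F i :=
        Submodule.mapQ (F (i + 1)) (F i) LinearMap.id (by
          intro x hx
          exact hFmono i hx) with hg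
      have hkerg : LinearMap.ker g = G := by
        rw [hg, Submodule.mapQ, Submodule.ker_liftQ]
        congr 1
        rw [LinearMap.ker_comp, Submodule.ker_mkQ]
        ext x
        simp
      exact finite_of_exact I G.subtype g G.injective_subtype
        (by rw [Submodule.range_subtype, hkerg])
  haveI := hclimb l
  exact finite_of_equiv I (Submodule.quotEquivOfEqBot (F l) hFl).symm

end Filtration

section Main

variable [IsNoetherianRing R]

lemma backward (M : Type u) [AddCommGroup M] [Module R M] [Module.Finite R M]
    (H : ∀ p ∈ associatedPrimes R M, ¬ I ≤ p → Module.Finite R (localHull R I (R ⧸ p))) :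
    Module.Finite R (localHull R I M) := by
  haveI : IsNoetherian R M := isNoetherian_of_isNoetherianRing_of_finite R M
  suffices h : ∀ N : Submodule R M,
      (∀ p ∈ associatedPrimes R (M ⧸ N), ¬ I ≤ p →
        Module.Finite R (localHull R I (R ⧸ p))) →
      Module.Finite R (localHull R I (M ⧸ N)) by
    have e : M ≃ₗ[R] (M ⧸ (⊥ : Submodule R M)) := (Submodule.quotEquivOfEqBot ⊥ rfl).symm
    haveI := h ⊥ (fun p hp => H p (by rwa [LinearEquiv.AssociatedPrimes.eq e]))
    exact finite_of_equiv I e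
  intro N
  induction N using IsNoetherian.induction with
  | hgt N ih =>
  intro hyp
  rcases subsingleton_or_nontrivial (M ⧸ N) with hss | hnt
  · exact finite_of_subsingleton I
  · obtain ⟨q, hqAss, hqmax⟩ :=
      set_has_maximal_iff_noetherian.mpr (inferInstance : IsNoetherian R R)
        (associatedPrimes R (M ⧸ N)) (associatedPrimes.nonempty R (M ⧸ N))
    have hqprime : Ideal.IsPrime q := hqAss.isPrime
    set T : Submodule R (M ⧸ N) := ptorsion q (M ⧸ N) with hT
    set N' : Submodule R M := T.comap N.mkQ with hN'
    have hle : N ≤ N' := by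
      intro x hx
      rw [hN', Submodule.mem_comap]
      have h0 : N.mkQ x = 0 := by
        rw [Submodule.mkQ_apply, Submodule.Quotient.mk_eq_zero]; exact hx
      rw [h0]
      exact Submodule.zero_mem T
    have hmapT : N'.map N.mkQ = T :=
      Submodule.map_comap_eq_of_surjective (Submodule.mkQ_surjective N) T
    have hlt : N < N' := by
      obtain ⟨w, hwT, hw0⟩ := (Submodule.ne_bot_iff _).mp (ptorsion_ne_bot hqAss)
      obtain ⟨y, rfl⟩ := Submodule.Quotient.mk_surjective N w
      refine lt_of_le_of_ne hle (fun hEq => hw0 ?_)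
      have hyN' : y ∈ N' := by rw [hN', Submodule.mem_comap]; exact hwT
      rw [← hEq] at hyN'
      rwa [Submodule.Quotient.mk_eq_zero]
    have e2 : ((M ⧸ N) ⧸ T) ≃ₗ[R] M ⧸ N' := by
      rw [← hmapT]
      exact Submodule.quotientQuotientEquivQuotient N N' hle
    have hyp' : ∀ p ∈ associatedPrimes R (M ⧸ N'), ¬ I ≤ p →
        Module.Finite R (localHull R I (R ⧸ p)) := by
      intro p hp hIp
      have hp2 : p ∈ associatedPrimes R ((M ⧸ N) ⧸ T) := by
        rwa [LinearEquiv.AssociatedPrimes.eq e2]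
      exact hyp p (ass_quotient_ptorsion hqprime hp2) hIp
    haveI hWT : Module.Finite R (localHull R I ((M ⧸ N) ⧸ T)) := by
      haveI := ih N' hlt hyp'
      exact finite_of_equiv I e2
    obtain ⟨l, hl⟩ := ptorsion_uniform (q := q) (W := M ⧸ N)
    have hkillT : ∀ a ∈ q ^ l, ∀ x : ↥T, a • x = 0 := by
      intro a ha x
      apply Subtype.ext
      rw [Submodule.coe_smul]
      exact hl a ha (x : M ⧸ N) x.2
    haveI hTfin : Module.Finite R (localHull R I ↥T) := by
      by_cases hIq : I ≤ q
      · exact finite_of_subsingleton_hull I (subsingleton_hull_of_nilpotent I hIq hkillT)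
      · haveI := hyp q hqAss hIq
        have hassT : associatedPrimes R ↥T ⊆ {q} := by
          intro p hp
          obtain ⟨hpW, hqp⟩ := ass_ptorsion_le hqprime hp
          have heq : q = p := by
            by_contra hne
            exact hqmax p hpW (hqp.lt_of_ne hne)
          exact heq ▸ rfl
        exact finite_hull_of_primary I hqprime ↥T l hkillT
          (torsionfree_of_ass_subset hassT)
    exact finite_of_exact I T.subtype T.mkQ T.injective_subtype
      (by rw [Submodule.range_subtype, Submodule.ker_mkQ])

lemma forward (M : Type u) [AddCommGroup M] [Module R M]
    [Module.Finite R (localHull R I M)] {q : Ideal R} (hq : q ∈ associatedPrimes R M) :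
    Module.Finite R (localHull R I (R ⧸ q)) := by
  obtain ⟨hprime, x, hx⟩ := isAssociatedPrime_iff.mp (AssociatedPrimes.mem_iff.mp hq)
  set f0 : R →ₗ[R] M := LinearMap.toSpanSingleton R M x with hf0
  have hker : LinearMap.ker f0 = q := by
    ext r
    rw [LinearMap.mem_ker, hf0, hx, Submodule.mem_colon_singleton, Submodule.mem_bot]
    rfl
  have hle : q ≤ LinearMap.ker f0 := le_of_eq hker.symm
  set f : (R ⧸ q) →ₗ[R] M := Submodule.liftQ q f0 hle with hf
  have hinj : Function.Injective f := by
    rw [← LinearMap.ker_eq_bot, hf, Submodule.ker_liftQ, hker]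
    ext z
    simp only [Submodule.mem_bot, Submodule.mem_map]
    constructor
    · rintro ⟨y, hy, rfl⟩
      rw [Submodule.mkQ_apply, Submodule.Quotient.mk_eq_zero]
      exact hy
    · rintro rfl
      exact ⟨0, Submodule.zero_mem q, by rw [Submodule.mkQ_apply, Submodule.Quotient.mk_zero]⟩
  exact finite_of_injective I f hinj

end Main

end LocalHullProof

/-- Let `R` be a Noetherian ring, `I ⊆ R` an ideal, and `M` a finite `R`-module such that no
associated prime of `M` contains `I`.  Then `colim_n Hom_R(Iⁿ, M)` is a finite `R`-module if
and only if, for every associated prime `q` of `M`, the module `colim_n Hom_R(Iⁿ, R/q)` is a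
finite `R`-module. -/
theorem local_hull_finite_iff_finite_on_associated_primes
    (R : Type u) [CommRing R] [IsNoetherianRing R] (I : Ideal R)
    (M : Type u) [AddCommGroup M] [Module R M] [Module.Finite R M]
    (hass : ∀ p ∈ associatedPrimes R M, ¬ I ≤ p) :
    Module.Finite R (localHull R I M) ↔
      ∀ q ∈ associatedPrimes R M, Module.Finite R (localHull R I (R ⧸ q)) := by
  constructor
  · intro hfin q hq
    haveI := hfin
    exact LocalHullProof.forward I M hq
  · intro h
    exact LocalHullProof.backward I M (fun p hp _ => h p hp)
end

section
/- Let R be a Noetherian domain, I ⊆ R a nonzero ideal, and M a finite torsion-free R-module of positive generic rank. Then colim_n Hom_R(I^n, M) is a finite R-module if and only if colim_n Hom_R(I^n, R) is a finite R-module. -/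
universe u

open TensorProduct

section Aux

variable {R : Type u} [CommRing R] (I : Ideal R)
variable {M N : Type u} [AddCommGroup M] [Module R M] [AddCommGroup N] [Module R N]

instance localHull.directedSystem :
    DirectedSystem (fun n => (I ^ n : Ideal R) →ₗ[R] M)
      (fun n m h =>
        (LinearMap.lcomp R M (Submodule.inclusion (Ideal.pow_le_pow_right h)) :
          ((I ^ n : Ideal R) →ₗ[R] M) →ₗ[R] ((I ^ m : Ideal R) →ₗ[R] M))) where
  map_self _ _ := rfl
  map_map _ _ _ _ _ _ := rfl

/-- Functoriality of the local hull. -/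
noncomputable def hullMap (g : M →ₗ[R] N) : localHull R I M →ₗ[R] localHull R I N :=
  Module.DirectLimit.map (fun n => LinearMap.llcomp R (I ^ n : Ideal R) M N g)
    (fun _ _ _ => rfl)

lemma hullMap_of (g : M →ₗ[R] N) (n : ℕ) (f : (I ^ n : Ideal R) →ₗ[R] M) :
    hullMap I g (Module.DirectLimit.of R ℕ _ _ n f) =
      Module.DirectLimit.of R ℕ (fun n => (I ^ n : Ideal R) →ₗ[R] N)
        (fun _ _ h => LinearMap.lcomp R N (Submodule.inclusion (Ideal.pow_le_pow_right h)))
        n (g ∘ₗ f) :=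
  Module.DirectLimit.map_apply_of _ _ _

/-- A finite jointly-injective family of maps `M → N` induces an injective map
`localHull M → (κ → localHull N)`. -/
lemma hullMap_pi_injective {κ : Type} [Finite κ] [Nonempty κ] (g : κ → (M →ₗ[R] N))
    (hg : ∀ m : M, (∀ k, g k m = 0) → m = 0) :
    Function.Injective
      (LinearMap.pi (fun k => hullMap I (g k)) :
        localHull R I M →ₗ[R] (κ → localHull R I N)) := by
  rw [injective_iff_map_eq_zero]
  intro x hx
  obtain ⟨n, f, rfl⟩ := Module.DirectLimit.exists_of x
  have hx' : ∀ k, Module.DirectLimit.of R ℕ (fun n => (I ^ n : Ideal R) →ₗ[R] N)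
      (fun _ _ h => LinearMap.lcomp R N (Submodule.inclusion (Ideal.pow_le_pow_right h)))
      n (g k ∘ₗ f) = 0 := by
    intro k
    have := congrFun hx k
    rwa [LinearMap.pi_apply, hullMap_of] at this
  choose m hm h0 using fun k => Module.DirectLimit.of.zero_exact (hx' k)
  obtain ⟨m₀, hm₀⟩ := Finite.exists_le m
  have hn : n ≤ m₀ := (hm (Classical.arbitrary κ)).trans (hm₀ (Classical.arbitrary κ))
  set f' : (I ^ m₀ : Ideal R) →ₗ[R] M :=
    f ∘ₗ Submodule.inclusion (Ideal.pow_le_pow_right hn) with hf'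
  have hgf' : ∀ k, g k ∘ₗ f' = 0 := by
    intro k
    have h0' := h0 k
    simp only [LinearMap.lcomp_apply'] at h0'
    calc g k ∘ₗ f' = (g k ∘ₗ f) ∘ₗ Submodule.inclusion (Ideal.pow_le_pow_right hn) := rfl
      _ = ((g k ∘ₗ f) ∘ₗ Submodule.inclusion (Ideal.pow_le_pow_right (hm k))) ∘ₗ
            Submodule.inclusion (Ideal.pow_le_pow_right (hm₀ k)) := rfl
      _ = (0 : (I ^ m k : Ideal R) →ₗ[R] N) ∘ₗ
            Submodule.inclusion (Ideal.pow_le_pow_right (hm₀ k)) := by rw [h0']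
      _ = 0 := LinearMap.zero_comp _
  have hf0 : f' = 0 := by
    ext a
    exact hg (f' a) fun k => LinearMap.congr_fun (hgf' k) a
  have : Module.DirectLimit.of R ℕ (fun n => (I ^ n : Ideal R) →ₗ[R] M)
      (fun _ _ h => LinearMap.lcomp R M (Submodule.inclusion (Ideal.pow_le_pow_right h)))
      n f = Module.DirectLimit.of R ℕ _ _ m₀ f' :=
    (Module.DirectLimit.of_f (hij := hn)).symm
  rw [this, hf0, map_zero]

/-- If there is a finite jointly-injective family of maps `M → N` and the local hull of `N`
is finite, then so is the local hull of `M`. -/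
lemma hull_finite_of_sep {R : Type u} [CommRing R] [IsNoetherianRing R] (I : Ideal R)
    {M N : Type u} [AddCommGroup M] [Module R M] [AddCommGroup N] [Module R N]
    [Module.Finite R (localHull R I N)]
    {κ : Type} [Finite κ] [Nonempty κ] (g : κ → (M →ₗ[R] N))
    (hg : ∀ m : M, (∀ k, g k m = 0) → m = 0) :
    Module.Finite R (localHull R I M) :=
  Module.Finite.of_injective (LinearMap.pi fun k => hullMap I (g k))
    (hullMap_pi_injective I g hg)

end Aux

/-- Let `R` be a Noetherian domain, `I ⊆ R` a nonzero ideal, and `M` a finite torsion-free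
`R`-module of positive generic rank.  Then `colim_n Hom_R(Iⁿ, M)` is a finite `R`-module if
and only if `colim_n Hom_R(Iⁿ, R)` is a finite `R`-module. -/
theorem local_hull_of_module_finite_iff_local_hull_of_ring_finite
    (R : Type u) [CommRing R] [IsDomain R] [IsNoetherianRing R]
    (I : Ideal R) (hI : I ≠ ⊥)
    (M : Type u) [AddCommGroup M] [Module R M] [Module.Finite R M]
    [NoZeroSMulDivisors R M]
    (hrank : 0 < Module.finrank (FractionRing R) (FractionRing R ⊗[R] M)) :
    Module.Finite R (localHull R I M) ↔ Module.Finite R (localHull R I R) := by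
  classical
  let K := FractionRing R
  constructor
  · -- `hull M` finite ⇒ `hull R` finite
    intro h
    have hMnt : Nontrivial M := by
      rcases subsingleton_or_nontrivial M with hs | hn
      · exfalso
        have hsub : Subsingleton (K ⊗[R] M) := by
          constructor
          intro x y
          have hz : ∀ z : K ⊗[R] M, z = 0 := fun z => by
            induction z using TensorProduct.induction_on with
            | zero => rfl
            | tmul a m => rw [Subsingleton.elim m (0 : M), tmul_zero]
            | add a b ha hb => rw [ha, hb, add_zero]
          rw [hz x, hz y]
        rw [Module.finrank_zero_of_subsingleton] at hrank
        exact lt_irrefl 0 hrank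
      · exact hn
    obtain ⟨m₀, hm₀⟩ := exists_ne (0 : M)
    refine hull_finite_of_sep I (κ := Fin 1)
      (fun _ => LinearMap.toSpanSingleton R M m₀) ?_
    intro x hx
    have hx0 := hx 0
    rw [LinearMap.toSpanSingleton_apply] at hx0
    rcases smul_eq_zero.mp hx0 with h' | h'
    · exact h'
    · exact absurd h' hm₀
  · -- `hull R` finite ⇒ `hull M` finite
    intro h
    have hr : 0 < Module.finrank K (K ⊗[R] M) := hrank
    let b : Module.Basis (Fin (Module.finrank K (K ⊗[R] M))) K (K ⊗[R] M) :=
      Module.finBasis K (K ⊗[R] M)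
    let ι0 : M →ₗ[R] (K ⊗[R] M) := TensorProduct.mk R K M 1
    have hbc : IsBaseChange K ι0 := TensorProduct.isBaseChange R M K
    haveI hloc : IsLocalizedModule (nonZeroDivisors R) ι0 :=
      (isLocalizedModule_iff_isBaseChange (nonZeroDivisors R) K ι0).mpr hbc
    have hιinj : Function.Injective ι0 := by
      rw [injective_iff_map_eq_zero]
      intro a ha
      obtain ⟨s, hs⟩ := (IsLocalizedModule.eq_zero_iff (nonZeroDivisors R) ι0).mp ha
      rw [Submonoid.smul_def] at hs
      rcases smul_eq_zero.mp hs with h' | h'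
      · exact absurd h' (nonZeroDivisors.coe_ne_zero s)
      · exact h'
    let c : M →ₗ[R] (Fin (Module.finrank K (K ⊗[R] M)) → K) :=
      (b.equivFun.restrictScalars R).toLinearMap ∘ₗ ι0
    have hcinj : Function.Injective c :=
      (b.equivFun.restrictScalars R).injective.comp hιinj
    obtain ⟨kgen, s, hs⟩ := Module.Finite.exists_fin (R := R) (M := M)
    obtain ⟨d, hd⟩ := IsLocalization.exist_integer_multiples_of_finite (nonZeroDivisors R)
      (fun pr : Fin (Module.finrank K (K ⊗[R] M)) × Fin kgen => c (s pr.2) pr.1)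
    let p : Submodule R K := LinearMap.range (Algebra.linearMap R K)
    have hmem : ∀ (x : M) (i : Fin (Module.finrank K (K ⊗[R] M))), (d : R) • c x i ∈ p := by
      intro x i
      have hx : x ∈ Submodule.span R (Set.range s) := hs ▸ Submodule.mem_top
      induction hx using Submodule.span_induction with
      | mem y hy =>
        obtain ⟨j, rfl⟩ := hy
        obtain ⟨a, ha⟩ := hd (i, j)
        exact ⟨a, ha⟩
      | zero => rw [map_zero]; simpa using p.zero_mem
      | add y z _ _ hy hz =>
        rw [map_add, Pi.add_apply, smul_add]
        exact p.add_mem hy hz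
      | smul a y _ hy =>
        rw [map_smul, Pi.smul_apply, smul_comm]
        exact p.smul_mem a hy
    let e : R ≃ₗ[R] p :=
      LinearEquiv.ofInjective (Algebra.linearMap R K) (IsFractionRing.injective R K)
    let g : Fin (Module.finrank K (K ⊗[R] M)) → (M →ₗ[R] R) := fun i =>
      e.symm.toLinearMap ∘ₗ
        LinearMap.codRestrict p ((d : R) • (LinearMap.proj (R := R) i ∘ₗ c))
          (fun x => by simpa using hmem x i)
    haveI : Nonempty (Fin (Module.finrank K (K ⊗[R] M))) := ⟨⟨0, hr⟩⟩
    refine hull_finite_of_sep I g ?_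
    intro x hx
    have hz : ∀ i, (d : R) • c x i = 0 := by
      intro i
      have h1 := hx i
      have h2 : LinearMap.codRestrict p ((d : R) • (LinearMap.proj (R := R) i ∘ₗ c))
          (fun y => by simpa using hmem y i) x = 0 := by
        apply e.symm.injective
        show e.symm.toLinearMap _ = e.symm.toLinearMap 0
        rw [map_zero]
        exact h1
      have h3 := congrArg Subtype.val h2
      simpa using h3
    have hcx : c x = 0 := by
      funext i
      rcases smul_eq_zero.mp (hz i) with h' | h'
      · exact absurd h' (nonZeroDivisors.coe_ne_zero d)
      · exact h'
    exact hcinj (by rw [hcx, map_zero])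
end
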